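/- If a linear isomorphism f : ℝ^d → ℝ^d has real eigenvalues λ > 1 and 0 < μ < 1, then f does not have the topological shadowing property. -/

import Mathlib

open Metric Filter Topology

/-- `n`-fold composition of a homeomorphism, `n : ℕ`. -/
def hpow {X : Type*} [TopologicalSpace X] (f : X ≃ₜ X) : ℕ → X ≃ₜ X
  | 0 => Homeomorph.refl X
  | n + 1 => (hpow f n).trans f

/-- `n`-th iterate of a homeomorphism, `n : ℤ` (negative powers use the inverse). -/
def hzpow {X : Type*} [TopologicalSpace X] (f : X ≃ₜ X) : ℤ → X ≃ₜ X
  | Int.ofNat n => hpow f n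
  | Int.negSucc n => (hpow f (n + 1)).symm

/-- `(xₙ)ₙ∈ℤ` is a `δ`-pseudo-orbit for `f`: `d(f(xₙ), xₙ₊₁) < δ(f(xₙ))` for all `n`. -/
def IsPseudoOrbit {X : Type*} [MetricSpace X] (f : X → X) (δ : X → ℝ) (x : ℤ → X) : Prop :=
  ∀ n : ℤ, dist (f (x n)) (x (n + 1)) < δ (f (x n))

/-- Topological shadowing property (strict shadowing inequality). -/
def TSP {X : Type*} [MetricSpace X] (f : X ≃ₜ X) : Prop :=
  ∀ ε : X → ℝ, Continuous ε → (∀ p, 0 < ε p) →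
    ∃ δ : X → ℝ, Continuous δ ∧ (∀ p, 0 < δ p) ∧
      ∀ x : ℤ → X, IsPseudoOrbit f δ x →
        ∃ y : X, ∀ n : ℤ, dist (hzpow f n y) (x n) < ε (x n)

section Aux
variable {X : Type*} [NormedAddCommGroup X] [NormedSpace ℝ X]

lemma hpow_eq_pow (e : X ≃L[ℝ] X) : ∀ (n : ℕ) (z : X),
    hpow e.toHomeomorph n z = ((e : X →L[ℝ] X) ^ n) z := by
  intro n
  induction n with
  | zero => intro z; rfl
  | succ n ih =>
      intro z
      have h1 : hpow e.toHomeomorph (n+1) z = e (hpow e.toHomeomorph n z) := rfl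
      rw [h1, ih z, pow_succ']
      simp [ContinuousLinearMap.mul_apply]

lemma pow_apply_norm_le (F : X →L[ℝ] X) : ∀ (n : ℕ) (z : X),
    ‖(F ^ n) z‖ ≤ (max ‖F‖ 1) ^ n * ‖z‖ := by
  intro n
  induction n with
  | zero => intro z; simp
  | succ n ih =>
    intro z
    rw [pow_succ, ContinuousLinearMap.mul_apply]
    calc ‖(F ^ n) (F z)‖ ≤ (max ‖F‖ 1) ^ n * ‖F z‖ := ih (F z)
      _ ≤ (max ‖F‖ 1) ^ n * (‖F‖ * ‖z‖) := by
          gcongr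
          exact F.le_opNorm z
      _ ≤ (max ‖F‖ 1) ^ n * ((max ‖F‖ 1) * ‖z‖) := by
          gcongr
          exact le_max_left _ _
      _ = (max ‖F‖ 1) ^ (n+1) * ‖z‖ := by ring

lemma pow_apply_eig (F : X →L[ℝ] X) (c : ℝ) (u : X) (hu : F u = c • u) :
    ∀ n : ℕ, (F ^ n) u = c ^ n • u := by
  intro n
  induction n with
  | zero => simp
  | succ n ih =>
    rw [pow_succ', ContinuousLinearMap.mul_apply, ih, map_smul, hu, smul_smul, ← pow_succ]

end Aux

set_option maxHeartbeats 1000000 in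
/-- A linear isomorphism of `ℝ^d` with a real eigenvalue `λ > 1` and a real eigenvalue
`0 < μ < 1` does not have the topological shadowing property. -/


theorem linear_iso_mixed_eigenvalues_not_TSP (d : ℕ)
    (f : EuclideanSpace ℝ (Fin d) ≃ₗ[ℝ] EuclideanSpace ℝ (Fin d)) (lam mu : ℝ)
    (hlam : Module.End.HasEigenvalue (f : EuclideanSpace ℝ (Fin d) →ₗ[ℝ] EuclideanSpace ℝ (Fin d)) lam)
    (hmu : Module.End.HasEigenvalue (f : EuclideanSpace ℝ (Fin d) →ₗ[ℝ] EuclideanSpace ℝ (Fin d)) mu)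
    (hlam1 : 1 < lam) (hmu0 : 0 < mu) (hmu1 : mu < 1) :
    ¬ TSP f.toContinuousLinearEquiv.toHomeomorph := by
  intro hTSP
  have hlam0 : (0:ℝ) < lam := lt_trans one_pos hlam1
  -- eigenvectors, normalized
  obtain ⟨v₁, hv₁⟩ := hlam.exists_hasEigenvector
  obtain ⟨w₁, hw₁⟩ := hmu.exists_hasEigenvector
  set v : EuclideanSpace ℝ (Fin d) := ‖v₁‖⁻¹ • v₁ with hvdef
  set w : EuclideanSpace ℝ (Fin d) := ‖w₁‖⁻¹ • w₁ with hwdef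
  have hvnorm : ‖v‖ = 1 := norm_smul_inv_norm hv₁.2
  have hwnorm : ‖w‖ = 1 := norm_smul_inv_norm hw₁.2
  set e := f.toContinuousLinearEquiv with hedef
  set F : EuclideanSpace ℝ (Fin d) →L[ℝ] EuclideanSpace ℝ (Fin d) := e.toContinuousLinearMap with hFdef
  have hFapp : ∀ z, F z = f z := by
    intro z
    simp [hFdef, hedef]
  have hFv : F v = lam • v := by
    rw [hFapp, hvdef, map_smul]
    have : f v₁ = lam • v₁ := hv₁.apply_eq_smul
    rw [this, smul_comm]
  have hFw : F w = mu • w := by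
    rw [hFapp, hwdef, map_smul]
    have : f w₁ = mu • w₁ := hw₁.apply_eq_smul
    rw [this, smul_comm]
  -- the homeomorphism acts on eigenlines
  have hh : ∀ z, e.toHomeomorph z = F z := fun z => rfl
  have hhv : ∀ a : ℝ, e.toHomeomorph (a • v) = (a * lam) • v := by
    intro a
    rw [hh, map_smul, hFv, smul_smul]
  have hhw : ∀ a : ℝ, e.toHomeomorph (a • w) = (a * mu) • w := by
    intro a
    rw [hh, map_smul, hFw, smul_smul]
  clear_value v w
  -- constants
  set C : ℝ := max ‖F‖ 1 with hCdef
  have hC1 : (1:ℝ) ≤ C := le_max_right _ _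
  have hC0 : (0:ℝ) < C := lt_of_lt_of_le one_pos hC1
  obtain ⟨k, hk⟩ : ∃ k : ℕ, mu ^ k < C⁻¹ :=
    exists_pow_lt_of_lt_one (by positivity) hmu1
  set q : ℝ := C * mu ^ k with hqdef
  have hq0 : (0:ℝ) ≤ q := by positivity
  have hq1 : q < 1 := by
    have := (mul_lt_mul_iff_right₀ hC0).2 hk
    rwa [mul_inv_cancel₀ hC0.ne'] at this
  -- the test function ε
  set ε : EuclideanSpace ℝ (Fin d) → ℝ := fun p => ((1 + ‖p‖) ^ k)⁻¹ with hεdef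
  have hεc : Continuous ε := by
    apply Continuous.inv₀ ((continuous_const.add continuous_norm).pow k)
    intro p; exact pow_ne_zero _ (ne_of_gt (add_pos_of_pos_of_nonneg one_pos (norm_nonneg _)))
  have hεpos : ∀ p, 0 < ε p := by intro p; simp only [hεdef]; positivity
  obtain ⟨δ, hδc, hδ0, hsh⟩ := hTSP ε hεc hεpos
  -- δ is bounded below near 0
  have hcont : ContinuousAt δ 0 := hδc.continuousAt
  rw [Metric.continuousAt_iff] at hcont
  obtain ⟨η, hη0, hη⟩ := hcont (δ 0 / 2) (by have := hδ0 0; positivity)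
  set r : ℝ := min (η/2) (δ 0 / 8) with hrdef
  have hr0 : 0 < r := lt_min (by positivity) (by have := hδ0 0; positivity)
  -- the pseudo-orbit
  set x : ℤ → EuclideanSpace ℝ (Fin d) :=
    fun n => if 0 ≤ n then (r * lam ^ n) • v else (r * mu ^ n) • w with hxdef
  have hpo : IsPseudoOrbit (⇑e.toHomeomorph) δ x := by
    intro n
    rcases le_or_gt 0 n with hn | hn
    · have h1 : x n = (r * lam ^ n) • v := if_pos hn
      have h2 : x (n+1) = (r * lam ^ (n+1)) • v := if_pos (by omega)
      have heq : e.toHomeomorph (x n) = x (n+1) := by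
        rw [h1, h2, hhv, zpow_add_one₀ hlam0.ne']
        ring_nf
      rw [heq, dist_self]
      exact hδ0 _
    · rcases eq_or_lt_of_le (by omega : n ≤ -1) with hn1 | hn1
      · -- the jump: n = -1
        have h1 : x n = (r * mu ^ (-1:ℤ)) • w := by rw [hn1]; exact if_neg (by norm_num)
        have h2 : x (n+1) = r • v := by
          rw [hn1]
          show x 0 = r • v
          have : x 0 = (r * lam ^ (0:ℤ)) • v := if_pos le_rfl
          rw [this]; norm_num
        have heq : e.toHomeomorph (x n) = r • w := by
          rw [h1, hhw]
          congr 1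
          rw [zpow_neg_one]
          field_simp
        rw [heq, h2]
        have hd : dist (r • w) (r • v) ≤ 2 * r := by
          rw [dist_eq_norm]
          have e1 : ‖r • w‖ = r := by
            rw [norm_smul, hwnorm, Real.norm_eq_abs, abs_of_pos hr0, mul_one]
          have e2 : ‖r • v‖ = r := by
            rw [norm_smul, hvnorm, Real.norm_eq_abs, abs_of_pos hr0, mul_one]
          calc ‖r • w - r • v‖ ≤ ‖r • w‖ + ‖r • v‖ := norm_sub_le _ _
            _ = 2 * r := by rw [e1, e2]; ring
        have hδrw : δ 0 / 2 < δ (r • w) := by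
          have hd0 : dist (r • w) 0 < η := by
            rw [dist_zero_right, norm_smul, hwnorm, Real.norm_eq_abs, abs_of_pos hr0]
            have : r ≤ η / 2 := min_le_left _ _
            linarith
          have := hη hd0
          rw [Real.dist_eq, abs_sub_lt_iff] at this
          linarith [this.2]
        have hr8 : r ≤ δ 0 / 8 := min_le_right _ _
        linarith
      · -- n ≤ -2
        have h1 : x n = (r * mu ^ n) • w := if_neg (by omega)
        have h2 : x (n+1) = (r * mu ^ (n+1)) • w := if_neg (by omega)
        have heq : e.toHomeomorph (x n) = x (n+1) := by
          rw [h1, h2, hhw, zpow_add_one₀ hmu0.ne']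
          ring_nf
        rw [heq, dist_self]
        exact hδ0 _
  obtain ⟨y, hy⟩ := hsh x hpo
  -- backward analysis: y = r • w
  have hyb : ∀ m : ℕ, ‖y - r • w‖ ≤ q ^ (m+1) * (r ^ k)⁻¹ := by
    intro m
    have hn := hy (Int.negSucc m)
    set a : ℝ := r * (mu ^ (m+1))⁻¹ with hadef
    have ha0 : 0 < a := by positivity
    have hmu' : (0:ℝ) < mu ^ (m+1) := by positivity
    have hxm : x (Int.negSucc m) = a • w := by
      have hneg : ¬ (0:ℤ) ≤ Int.negSucc m := by exact (Int.negSucc_lt_zero m : Int.negSucc m < 0).not_ge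
      have : x (Int.negSucc m) = (r * mu ^ (Int.negSucc m : ℤ)) • w := if_neg hneg
      rw [this, zpow_negSucc]
    have hz : hzpow e.toHomeomorph (Int.negSucc m) y = (hpow e.toHomeomorph (m+1)).symm y := rfl
    set z := (hpow e.toHomeomorph (m+1)).symm y with hzdef
    have hyz : (F ^ (m+1)) z = y := by
      rw [← hpow_eq_pow]
      exact Homeomorph.apply_symm_apply _ y
    have haw : (F ^ (m+1)) (a • w) = r • w := by
      rw [map_smul, pow_apply_eig F mu w hFw (m+1), smul_smul, hadef]
      congr 1
      field_simp
    have h1 : ‖y - r • w‖ ≤ C ^ (m+1) * ‖z - a • w‖ := by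
      rw [← hyz, ← haw, ← map_sub]
      exact pow_apply_norm_le F (m+1) _
    have hdist : ‖z - a • w‖ < ε (x (Int.negSucc m)) := by
      rw [← dist_eq_norm, ← hxm]
      exact hz ▸ hn
    have hεle : ε (x (Int.negSucc m)) ≤ (a ^ k)⁻¹ := by
      rw [hxm]
      simp only [hεdef]
      have hna : ‖a • w‖ = a := by
        rw [norm_smul, hwnorm, Real.norm_eq_abs, abs_of_pos ha0, mul_one]
      rw [hna]
      have hpow_le : a ^ k ≤ (1 + a) ^ k := by
        apply pow_le_pow_left₀ ha0.le
        linarith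
      exact inv_anti₀ (by positivity) hpow_le
    have h2 : ‖y - r • w‖ ≤ C ^ (m+1) * (a ^ k)⁻¹ := by
      calc ‖y - r • w‖ ≤ C ^ (m+1) * ‖z - a • w‖ := h1
        _ ≤ C ^ (m+1) * (a ^ k)⁻¹ := by
            gcongr
            exact le_of_lt (lt_of_lt_of_le hdist hεle)
    have halg : C ^ (m+1) * (a ^ k)⁻¹ = q ^ (m+1) * (r ^ k)⁻¹ := by
      have hb : a ^ k = r ^ k * ((mu ^ k) ^ (m+1))⁻¹ := by
        rw [hadef, mul_pow, inv_pow, ← pow_mul, ← pow_mul, Nat.mul_comm]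
      rw [hb, hqdef, mul_pow, mul_inv, inv_inv]
      ring
    rw [halg] at h2
    exact h2
  have hlim : Tendsto (fun m : ℕ => q ^ (m+1) * (r ^ k)⁻¹) atTop (nhds 0) := by
    have h := tendsto_pow_atTop_nhds_zero_of_lt_one hq0 hq1
    have h2 := (h.comp (tendsto_add_atTop_nat 1)).mul_const (r ^ k)⁻¹
    simpa using h2
  have hyeq : y = r • w := by
    have hle : ‖y - r • w‖ ≤ 0 := ge_of_tendsto' hlim hyb
    have : ‖y - r • w‖ = 0 := le_antisymm hle (norm_nonneg _)
    rw [norm_eq_zero, sub_eq_zero] at this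
    exact this
  -- forward contradiction
  obtain ⟨N, hN⟩ : ∃ N : ℕ, 1 + 1/r < lam ^ N := pow_unbounded_of_one_lt _ hlam1
  have hfwd := hy (N : ℤ)
  have hzN : hzpow e.toHomeomorph (N : ℤ) y = (F ^ N) y := by
    rw [show hzpow e.toHomeomorph (N : ℤ) = hpow e.toHomeomorph N from rfl, hpow_eq_pow]
  have hxN : x (N : ℤ) = (r * lam ^ N) • v := by
    have : x (N : ℤ) = (r * lam ^ (N:ℤ)) • v := if_pos (Int.natCast_nonneg N)
    rw [this, zpow_natCast]
  have hFy : (F ^ N) y = (r * mu ^ N) • w := by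
    rw [hyeq, map_smul, pow_apply_eig F mu w hFw N, smul_smul]
  have hub : ε (x (N : ℤ)) ≤ 1 := by
    simp only [hεdef]
    apply inv_le_one_of_one_le₀
    exact one_le_pow₀ (by linarith [norm_nonneg (x (N:ℤ))])
  have hmuN : mu ^ N ≤ 1 := pow_le_one₀ hmu0.le hmu1.le
  have hlb : 1 < dist ((r * mu ^ N) • w) ((r * lam ^ N) • v) := by
    rw [dist_eq_norm]
    have h1 : ‖(r * lam ^ N) • v‖ - ‖(r * mu ^ N) • w‖ ≤ ‖(r * mu ^ N) • w - (r * lam ^ N) • v‖ := by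
      rw [norm_sub_rev]
      exact norm_sub_norm_le _ _
    have h2 : ‖(r * lam ^ N) • v‖ = r * lam ^ N := by
      rw [norm_smul, hvnorm, Real.norm_eq_abs, mul_one, abs_of_pos (by positivity)]
    have h3 : ‖(r * mu ^ N) • w‖ = r * mu ^ N := by
      rw [norm_smul, hwnorm, Real.norm_eq_abs, mul_one, abs_of_pos (by positivity)]
    rw [h2, h3] at h1
    have h4 : r * (1 + 1/r) < r * lam ^ N := by
      exact (mul_lt_mul_iff_right₀ hr0).2 hN
    have h5 : r * (1 + 1/r) = r + 1 := by field_simp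
    have h6 : r * mu ^ N ≤ r := by nlinarith
    linarith
  rw [hzN, hFy, hxN] at hfwd
  linarith [lt_of_lt_of_le hfwd hub]
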